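/- Suppose X is a metric space, K ⊆ X × 𝕊¹ is closed and rotation-coherent, and there is an integer h ≥ 1 such that card(K_y) = h for every y ∈ X. Then the restriction to K of the first-coordinate projection, π : K → X with π(x,θ) = x, is a covering map (each point of X has an evenly covered neighborhood, and each fiber of π has exactly h points). (This is the claim in the proof of the Proposition on skew products that (K,π) is an h-fold covering of M.) -/

import Mathlib

local notation "S" => AddCircle (1 : ℝ)

/-- Let `𝕊¹ = ℝ/ℤ` and `X` a metric space. Suppose `K ⊆ X × 𝕊¹` is closed
and rotation-coherent, and there is an integer `h ≥ 1` with `card(K_y) = h` for every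
`y ∈ X`. Then the restriction to `K` of the first-coordinate projection `π : K → X`,
`π(x,θ) = x`, is a covering map, and each fiber of `π` has exactly `h` points. -/
theorem stmt8_projection_is_covering_map
    {X : Type*} [MetricSpace X]
    (K : Set (X × AddCircle (1 : ℝ)))
    (hK_cl : IsClosed K)
    (hK_rot : ∀ α : AddCircle (1 : ℝ),
      ((fun p : X × AddCircle (1 : ℝ) => (p.1, p.2 + α)) '' K ∩ K).Nonempty →
      (fun p : X × AddCircle (1 : ℝ) => (p.1, p.2 + α)) '' K = K)
    (h : ℕ) (hh : 1 ≤ h)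
    (h_card : ∀ y : X, {θ : AddCircle (1 : ℝ) | (y, θ) ∈ K}.ncard = h) :
    IsCoveringMap (fun k : K => (k : X × AddCircle (1 : ℝ)).1) ∧
    ∀ x : X, Nat.card ((fun k : K => (k : X × AddCircle (1 : ℝ)).1) ⁻¹' {x}) = h := by
  classical
  haveI : Fact ((0:ℝ) < 1) := ⟨one_pos⟩
  set π : K → X := fun k => (k : X × S).1 with hπ
  -- the cardinality claim (independent of the covering structure)
  have card_claim : ∀ x : X, Nat.card (π ⁻¹' {x}) = h := by
    intro x
    have e : (π ⁻¹' {x}) ≃ {θ : S | (x, θ) ∈ K} :=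
      { toFun := fun k => ⟨(k.1 : X × S).2, by
          have h1 := k.1.2
          have h2 : (k.1 : X × S).1 = x := k.2
          simp only [Set.mem_setOf_eq, ← h2]
          simpa using h1⟩
        invFun := fun θ => ⟨⟨(x, θ.1), θ.2⟩, rfl⟩
        left_inv := fun k => by
          apply Subtype.ext; apply Subtype.ext
          exact Prod.ext (k.2 : (k.1 : X × S).1 = x).symm rfl
        right_inv := fun θ => rfl }
    rw [Nat.card_congr e, Nat.card_coe_set_eq, h_card]
  refine ⟨?_, card_claim⟩
  -- covering map claim
  intro x₀
  haveI hXne : Nonempty X := ⟨x₀⟩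
  -- fibers are nonempty and finite
  have hfib_ne : ∀ y : X, ∃ θ : S, (y, θ) ∈ K := by
    intro y
    have := Set.nonempty_of_ncard_ne_zero (s := {θ : S | (y, θ) ∈ K}) (by rw [h_card]; omega)
    exact this
  have hfib_fin : ∀ y : X, {θ : S | (y, θ) ∈ K}.Finite := by
    intro y
    by_contra hf
    have h0 : {θ : S | (y, θ) ∈ K}.ncard = 0 := Set.Infinite.ncard hf
    rw [h_card] at h0; omega
  -- the key rotation-coherence consequence
  have key : ∀ {y : X} {θ θ' : S}, (y, θ) ∈ K → (y, θ') ∈ K →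
      ∀ {p : X × S}, p ∈ K → (p.1, p.2 + (θ' - θ)) ∈ K := by
    intro y θ θ' hθ hθ' p hp
    have hne : ((fun p : X × S => (p.1, p.2 + (θ' - θ))) '' K ∩ K).Nonempty := by
      refine ⟨(y, θ'), ⟨(y, θ), hθ, ?_⟩, hθ'⟩
      simp [add_sub_cancel]
    have himg := hK_rot (θ' - θ) hne
    rw [← himg]
    exact ⟨p, hp, rfl⟩
  set D : Set S := {α | ∀ p ∈ K, (p.1, p.2 + α) ∈ K} with hD_def
  have hD_diff : ∀ {y : X} {θ θ' : S}, (y, θ) ∈ K → (y, θ') ∈ K → θ' - θ ∈ D := by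
    intro y θ θ' hθ hθ' p hp
    exact key hθ hθ' hp
  have hD_mem_fiber : ∀ {y : X} {θ : S} {α : S}, (y, θ) ∈ K → α ∈ D → (y, θ + α) ∈ K := by
    intro y θ α hθ hα
    exact hα (y, θ) hθ
  have hD_zero : (0 : S) ∈ D := by
    intro p hp; simpa using hp
  -- D is a subgroup
  have hD_add : ∀ {α β : S}, α ∈ D → β ∈ D → α + β ∈ D := by
    intro α β hα hβ p hp
    have h1 := hα p hp
    have h2 := hβ (p.1, p.2 + α) h1
    simpa [add_assoc] using h2
  have hD_neg : ∀ {α : S}, α ∈ D → -α ∈ D := by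
    intro α hα q hq
    have h1 : (q.1, q.2 + α) ∈ K := hα q hq
    have h2 := key h1 hq hq
    simpa [sub_add_cancel_left, sub_add_eq_sub_sub] using h2
  -- D is finite of cardinality h
  obtain ⟨θc, hθc⟩ := hfib_ne x₀
  have hD_eq_img : D = (fun β => β - θc) '' {θ' : S | (x₀, θ') ∈ K} := by
    ext α
    constructor
    · intro hα
      exact ⟨θc + α, hD_mem_fiber hθc hα, by simp [add_sub_cancel_left]⟩
    · rintro ⟨β, hβ, rfl⟩
      exact hD_diff hθc hβ
  have hsub_inj : Function.Injective (fun β : S => β - θc) := by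
    intro a b hab
    simpa using congrArg (· + θc) hab
  have hD_fin : D.Finite := by
    rw [hD_eq_img]; exact (hfib_fin x₀).image _
  have hD_card : D.ncard = h := by
    rw [hD_eq_img, Set.ncard_image_of_injective _ hsub_inj, h_card]
  -- Lagrange : every element of D is h-torsion
  haveI : Finite ↥D := hD_fin.to_subtype
  have hD_tor : ∀ α ∈ D, h • α = 0 := by
    intro α hα
    set DS : AddSubgroup S :=
      { carrier := D
        zero_mem' := hD_zero
        add_mem' := fun ha hb => hD_add ha hb
        neg_mem' := fun ha => hD_neg ha }
    have hcard : Nat.card DS = h := by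
      have : Nat.card DS = D.ncard := Nat.card_coe_set_eq D
      rw [this, hD_card]
    have h1 : Nat.card DS • (⟨α, hα⟩ : DS) = 0 := card_nsmul_eq_zero'
    rw [hcard] at h1
    have h2 := congrArg (Subtype.val) h1
    simpa using h2
  -- the h-torsion subgroup has exactly h elements, hence equals D
  set T : Set S := {z : S | h • z = 0} with hT_def
  have hD_sub_T : D ⊆ T := fun α hα => hD_tor α hα
  have hhR : (h : ℝ) ≠ 0 := by positivity
  set f : Fin h → S := fun k => (((k : ℕ) : ℝ) / h : ℝ) with hf_def
  have hf_inj : Function.Injective f := by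
    intro k k' hkk
    have h1 : (((k : ℕ) : ℝ) / h : ℝ) - (((k' : ℕ) : ℝ) / h) ∈ AddSubgroup.zmultiples (1:ℝ) :=
      QuotientAddGroup.eq_iff_sub_mem.mp hkk
    obtain ⟨n, hn⟩ := h1
    have hn' : (n : ℝ) = (((k : ℕ) : ℝ) - ((k' : ℕ) : ℝ)) / h := by
      rw [sub_div]
      simpa using hn
    have hb1 : (((k : ℕ) : ℝ) - ((k' : ℕ) : ℝ)) < h := by
      have := k.2
      have h2 : ((k : ℕ) : ℝ) < h := by exact_mod_cast this
      have h3 : (0:ℝ) ≤ ((k' : ℕ) : ℝ) := by positivity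
      linarith
    have hb2 : -(h:ℝ) < (((k : ℕ) : ℝ) - ((k' : ℕ) : ℝ)) := by
      have := k'.2
      have h2 : ((k' : ℕ) : ℝ) < h := by exact_mod_cast this
      have h3 : (0:ℝ) ≤ ((k : ℕ) : ℝ) := by positivity
      linarith
    have hhpos : (0:ℝ) < h := by positivity
    have hn1 : (n : ℝ) < 1 := by rw [hn']; rw [div_lt_one hhpos]; exact hb1
    have hn2 : (-1 : ℝ) < n := by
      rw [hn']
      rw [lt_div_iff₀ hhpos]
      linarith
    have hn0 : n = 0 := by
      have e1 : n < 1 := by exact_mod_cast hn1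
      have e2 : (-1 : ℤ) < n := by exact_mod_cast hn2
      omega
    rw [hn0] at hn'
    have : ((k : ℕ) : ℝ) = ((k' : ℕ) : ℝ) := by
      have := hn'.symm
      field_simp at this
      push_cast at this
      linarith
    have : (k : ℕ) = (k' : ℕ) := by exact_mod_cast this
    exact Fin.ext this
  have hT_eq : T = Set.range f := by
    ext z
    constructor
    · intro hz
      induction z using QuotientAddGroup.induction_on with
      | H x =>
        have h1 : ((h • x : ℝ) : S) = 0 := by
          rw [AddCircle.coe_nsmul]; exact hz
        rw [AddCircle.coe_eq_zero_iff] at h1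
        obtain ⟨n, hn⟩ := h1
        have hx : x = (n : ℝ) / h := by
          have : (n : ℝ) = h • x := by simpa using hn
          rw [this]
          rw [nsmul_eq_mul]
          field_simp
        have hhZ : (0:ℤ) < (h:ℤ) := by exact_mod_cast Nat.pos_of_ne_zero (by omega)
        set m : ℤ := n % h with hm
        have hm0 : 0 ≤ m := Int.emod_nonneg n (by omega)
        have hmh : m < h := Int.emod_lt_of_pos n hhZ
        refine ⟨⟨m.toNat, by omega⟩, ?_⟩
        show (((m.toNat : ℕ) : ℝ) / h : ℝ) = (x : S)
        rw [QuotientAddGroup.eq_iff_sub_mem]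
        refine ⟨-(n / h), ?_⟩
        have hmr : ((m.toNat : ℕ) : ℝ) = (m : ℝ) := by
          rw [← Int.cast_natCast, Int.toNat_of_nonneg hm0]
        rw [hx, hmr]
        have hdiv : n = h * (n / h) + m := (Int.mul_ediv_add_emod n h).symm
        have : (m : ℝ) = (n : ℝ) - (h : ℝ) * ((n / h : ℤ) : ℝ) := by
          have := congrArg (fun t : ℤ => (t : ℝ)) hdiv
          push_cast at this ⊢
          linarith
        rw [this]
        field_simp
        ring
    · rintro ⟨k, rfl⟩
      show h • (f k) = 0
      rw [hf_def]
      have : h • ((((k : ℕ) : ℝ) / h : ℝ) : S) = ((h • (((k : ℕ) : ℝ) / h) : ℝ) : S) := by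
        rw [AddCircle.coe_nsmul]
      rw [this]
      have : (h • (((k : ℕ) : ℝ) / h) : ℝ) = ((k : ℕ) : ℝ) := by
        rw [nsmul_eq_mul]; field_simp
      rw [this, AddCircle.coe_eq_zero_iff]
      exact ⟨(k : ℕ), by simp⟩
  have hT_fin : T.Finite := by rw [hT_eq]; exact Set.finite_range f
  have hT_card : T.ncard = h := by
    rw [hT_eq, ← Set.image_univ, Set.ncard_image_of_injective _ hf_inj, Set.ncard_univ]
    simp
  have hDT : D = T := Set.eq_of_subset_of_ncard_le hD_sub_T (by rw [hT_card, hD_card]) hT_fin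
  have hT_D : ∀ z : S, h • z = 0 → z ∈ D := by
    intro z hz; rw [hDT]; exact hz
  -- the continuous "h-fold rotation number" function g
  choose ξ hξ using hfib_ne
  set g : X → S := fun y => h • ξ y with hg_def
  have hg_spec : ∀ {y : X} {θ : S}, (y, θ) ∈ K → g y = h • θ := by
    intro y θ hθ
    have hd : θ - ξ y ∈ D := hD_diff (hξ y) hθ
    have h0 : h • (θ - ξ y) = 0 := hD_tor _ hd
    rw [smul_sub] at h0
    have := sub_eq_zero.mp h0
    rw [hg_def]
    simp only
    rw [this]
  have hq_cont : Continuous (fun z : S => h • z) := continuous_nsmul h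
  have hGraph : IsClosed {p : X × S | p.2 = g p.1} := by
    have himg : {p : X × S | p.2 = g p.1} = (Prod.map id (fun z : S => h • z)) '' K := by
      ext p
      constructor
      · intro hp
        refine ⟨(p.1, ξ p.1), hξ p.1, ?_⟩
        simp only [Prod.map, id_eq]
        exact Prod.ext rfl (by rw [hp, hg_def])
      · rintro ⟨q, hq, rfl⟩
        show (Prod.map id (fun z : S => h • z) q).2 = g (Prod.map id _ q).1
        simp only [Prod.map, id_eq]
        exact (hg_spec (by simpa using hq)).symm
    rw [himg]
    exact (isProperMap_id.prodMap hq_cont.isProperMap).isClosedMap K hK_cl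
  have hg_cont : Continuous g := by
    rw [continuous_iff_isClosed]
    intro C hC
    have : g ⁻¹' C = Prod.fst '' ({p : X × S | p.2 = g p.1} ∩ (Set.univ ×ˢ C)) := by
      ext y
      constructor
      · intro hy
        exact ⟨(y, g y), ⟨rfl, ⟨trivial, hy⟩⟩, rfl⟩
      · rintro ⟨p, ⟨hp1, ⟨_, hp2⟩⟩, rfl⟩
        rw [Set.mem_preimage, ← hp1]; exact hp2
    rw [this]
    exact isClosedMap_fst_of_compactSpace _ (hGraph.inter (isClosed_univ.prod hC))
  -- local section near x₀
  obtain ⟨θ₀, hθ₀⟩ : ∃ θ : S, (x₀, θ) ∈ K := ⟨ξ x₀, hξ x₀⟩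
  obtain ⟨t₀, ht₀⟩ : ∃ t : ℝ, (t : S) = θ₀ := QuotientAddGroup.mk_surjective θ₀
  set a : ℝ := h * t₀ - 2⁻¹ with ha_def
  set φ : S → ℝ := fun z => ((AddCircle.equivIco 1 a z : ℝ)) with hφ_def
  have hφ : ∀ z : S, ((φ z : ℝ) : S) = z := fun z => (AddCircle.equivIco 1 a).symm_apply_apply z
  set U : Set X := g ⁻¹' {(a : S)}ᶜ with hU_def
  have hU_open : IsOpen U := (isOpen_compl_singleton).preimage hg_cont
  have hgx₀ : g x₀ = ((h * t₀ : ℝ) : S) := by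
    rw [hg_spec hθ₀, ← ht₀]
    rw [← AddCircle.coe_nsmul, nsmul_eq_mul]
  have hx₀U : x₀ ∈ U := by
    simp only [hU_def, Set.mem_preimage, Set.mem_compl_iff, Set.mem_singleton_iff]
    rw [hgx₀]
    intro hcon
    rw [QuotientAddGroup.eq_iff_sub_mem] at hcon
    obtain ⟨n, hn⟩ := hcon
    have : (n : ℝ) = 2⁻¹ := by
      have : h * t₀ - a = 2⁻¹ := by rw [ha_def]; ring
      rw [this] at hn
      simpa using hn
    have h2 : ((2 * n : ℤ) : ℝ) = 1 := by push_cast; rw [this]; norm_num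
    have : (2 * n : ℤ) = 1 := by exact_mod_cast h2
    omega
  have hφ₀ : φ ((h * t₀ : ℝ) : S) = h * t₀ := by
    have hmem : h * t₀ ∈ Set.Ico a (a + 1) := by
      constructor
      · rw [ha_def]; linarith
      · rw [ha_def]; linarith
    have h1 : AddCircle.equivIco 1 a (((h * t₀ : ℝ)) : S) = ⟨h * t₀, hmem⟩ :=
      (AddCircle.equivIco 1 a).apply_symm_apply ⟨h * t₀, hmem⟩
    rw [hφ_def]
    show ((AddCircle.equivIco 1 a ((h * t₀ : ℝ) : S) : ℝ)) = h * t₀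
    rw [h1]
  set s : X → S := fun y => ((φ (g y) / h : ℝ) : S) with hs_def
  have hs_cont : ContinuousOn s U := by
    intro y hy
    apply ContinuousAt.continuousWithinAt
    have h1 : ContinuousAt (AddCircle.equivIco 1 a) (g y) :=
      AddCircle.continuousAt_equivIco 1 a (by simpa [hU_def] using hy)
    have h2 : ContinuousAt φ (g y) := continuousAt_subtype_val.comp h1
    have h3 : ContinuousAt (fun y => φ (g y)) y := h2.comp hg_cont.continuousAt
    exact ((AddCircle.continuous_mk' 1).continuousAt).comp (h3.div_const _)
  have hqs : ∀ y ∈ U, h • s y = g y := by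
    intro y hy
    rw [hs_def]
    simp only
    rw [← AddCircle.coe_nsmul, nsmul_eq_mul, mul_div_cancel₀ _ hhR, hφ]
  have hs₀ : s x₀ = θ₀ := by
    rw [hs_def]
    simp only
    rw [hgx₀, hφ₀, mul_div_cancel_left₀ _ hhR, ht₀]
  have hsK : ∀ y ∈ U, (y, s y) ∈ K := by
    intro y hy
    have h0 : h • (s y - ξ y) = 0 := by
      rw [smul_sub, hqs y hy, hg_spec (hξ y)]
      exact sub_self _
    have hd : s y - ξ y ∈ D := hT_D _ h0
    have := hD_mem_fiber (hξ y) hd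
    simpa [add_sub_cancel] using this
  -- membership facts for the trivialization
  have hmemD : ∀ (k : K), (k : X × S).1 ∈ U → (k : X × S).2 - s (k : X × S).1 ∈ D := by
    intro k hk
    exact hD_diff (hsK _ hk) (by simpa using k.2)
  have hmemK : ∀ (y : X), y ∈ U → ∀ d : S, d ∈ D → (y, s y + d) ∈ K := by
    intro y hy d hd
    exact hD_mem_fiber (hsK y hy) hd
  haveI : DiscreteTopology ↥D := inferInstance
  set k₀ : K := ⟨(x₀, θ₀), hθ₀⟩ with hk₀
  -- the trivialization
  set triv : Bundle.Trivialization ↥D π :=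
    { toFun := fun k => ((k : X × S).1,
        if hd : (k : X × S).2 - s (k : X × S).1 ∈ D
        then (⟨_, hd⟩ : ↥D) else ⟨0, hD_zero⟩)
      invFun := fun yd =>
        if hm : (yd.1, s yd.1 + (yd.2 : S)) ∈ K then (⟨_, hm⟩ : K) else k₀
      source := {k : K | (k : X × S).1 ∈ U}
      target := U ×ˢ (Set.univ : Set ↥D)
      map_source' := fun k hk => ⟨hk, trivial⟩
      map_target' := by
        rintro ⟨y, d⟩ ⟨hy, -⟩
        have hm := hmemK y hy d d.2
        simp only [Set.mem_setOf_eq, dif_pos hm]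
        exact hy
      left_inv' := by
        intro k hk
        have hd := hmemD k hk
        have hcond : ((k : X × S).1, s (k : X × S).1 + ((k : X × S).2 - s (k : X × S).1)) ∈ K := by
          rw [add_sub_cancel]
          simpa using k.2
        simp only [dif_pos hd, dif_pos hcond]
        apply Subtype.ext
        exact Prod.ext rfl (add_sub_cancel _ _)
      right_inv' := by
        rintro ⟨y, d⟩ ⟨hy, -⟩
        have hm := hmemK y hy d d.2
        have hc : s y + (d : S) - s y ∈ D := by
          rw [add_sub_cancel_left]; exact d.2
        simp only [dif_pos hm, dif_pos hc]
        refine Prod.ext rfl ?_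
        apply Subtype.ext
        simp [add_sub_cancel_left]
      open_source := hU_open.preimage (continuous_fst.comp continuous_subtype_val)
      open_target := hU_open.prod isOpen_univ
      continuousOn_toFun := by
        have hval : Topology.IsInducing (fun p : X × ↥D => (p.1, (p.2 : S))) :=
          Topology.IsInducing.id.prodMap Topology.IsInducing.subtypeVal
        rw [hval.continuousOn_iff]
        apply ContinuousOn.congr
          (f := fun k : K => ((k : X × S).1, (k : X × S).2 - s (k : X × S).1))
        · refine ContinuousOn.prodMk ?_ ?_
          · exact (continuous_fst.comp continuous_subtype_val).continuousOn
          · refine ContinuousOn.sub ?_ ?_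
            · exact (continuous_snd.comp continuous_subtype_val).continuousOn
            · exact hs_cont.comp
                (continuous_fst.comp continuous_subtype_val).continuousOn
                (fun k hk => hk)
        · intro k hk
          have hd := hmemD k hk
          simp only [Function.comp, dif_pos hd]
      continuousOn_invFun := by
        rw [Topology.IsInducing.subtypeVal.continuousOn_iff]
        apply ContinuousOn.congr (f := fun yd : X × ↥D => (yd.1, s yd.1 + (yd.2 : S)))
        · refine ContinuousOn.prodMk continuous_fst.continuousOn ?_
          refine ContinuousOn.add (f := fun p : X × ↥D => s p.1) (g := fun p : X × ↥D => (p.2 : S)) ?_ ?_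
          · exact hs_cont.comp continuous_fst.continuousOn (fun p hp => hp.1)
          · exact (continuous_subtype_val.comp continuous_snd).continuousOn
        · rintro ⟨y, d⟩ ⟨hy, -⟩
          have hm := hmemK y hy d d.2
          simp only [Function.comp, dif_pos hm]
      baseSet := U
      open_baseSet := hU_open
      source_eq := rfl
      target_eq := rfl
      proj_toFun := fun p hp => rfl } with htriv
  exact IsEvenlyCovered.to_isEvenlyCovered_preimage (IsEvenlyCovered.of_trivialization (t := triv) hx₀U)
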